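/- For n×n positive definite complex matrices A, B, n×n positive semidefinite complex matrices C, D, and any positive real number r, the trace Tr[(A−B)(B⁻¹−A⁻¹) + 4(C−D)((rB+D)⁻¹−(rA+C)⁻¹)] is a real number and is greater than or equal to 0. -/

import Mathlib

open Matrix ComplexOrder

section Aux

variable {n : ℕ}

private lemma aux_isUnit_det {M : Matrix (Fin n) (Fin n) ℂ} (hM : M.PosDef) :
    IsUnit M.det :=
  isUnit_iff_ne_zero.mpr (ne_of_gt hM.det_pos)

private lemma aux_smul_posDef {M : Matrix (Fin n) (Fin n) ℂ} (hM : M.PosDef)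
    {r : ℝ} (hr : 0 < r) : ((r : ℂ) • M).PosDef := by
  refine Matrix.PosDef.of_dotProduct_mulVec_pos ?_ (fun x hx => ?_)
  · have hs : star (r : ℂ) = (r : ℂ) := by
      simp [Complex.star_def, Complex.conj_ofReal]
    show ((r : ℂ) • M)ᴴ = (r : ℂ) • M
    rw [conjTranspose_smul, hs, hM.1.eq]
  · have h := hM.dotProduct_mulVec_pos hx
    have hrc : (0 : ℂ) < (r : ℂ) := by
      rw [Complex.lt_def]; simp [hr]
    rw [smul_mulVec, dotProduct_smul, smul_eq_mul]
    exact mul_pos hrc h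

private lemma aux_smul_posSemidef {M : Matrix (Fin n) (Fin n) ℂ} (hM : M.PosSemidef)
    {r : ℝ} (hr : 0 ≤ r) : ((r : ℂ) • M).PosSemidef := by
  refine Matrix.PosSemidef.of_dotProduct_mulVec_nonneg ?_ (fun x => ?_)
  · have hs : star (r : ℂ) = (r : ℂ) := by
      simp [Complex.star_def, Complex.conj_ofReal]
    show ((r : ℂ) • M)ᴴ = (r : ℂ) • M
    rw [conjTranspose_smul, hs, hM.1.eq]
  · have h := hM.dotProduct_mulVec_nonneg x
    have hrc : (0 : ℂ) ≤ (r : ℂ) := by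
      rw [Complex.le_def]; simp [hr]
    rw [smul_mulVec, dotProduct_smul, smul_eq_mul]
    exact mul_nonneg hrc h

private lemma aux_trace_nonneg {M : Matrix (Fin n) (Fin n) ℂ} (hM : M.PosSemidef) :
    0 ≤ M.trace := by
  rw [Matrix.trace]
  apply Finset.sum_nonneg
  intro i _
  have h := hM.dotProduct_mulVec_nonneg (Pi.single i 1)
  simpa [dotProduct, Pi.single_apply, apply_ite] using h

open scoped MatrixOrder in
private lemma aux_trace_mul_nonneg {P S : Matrix (Fin n) (Fin n) ℂ}
    (hP : P.PosSemidef) (hS : S.PosSemidef) : 0 ≤ (P * S).trace := by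
  have hsq : CFC.sqrt P * CFC.sqrt P = P := CFC.sqrt_mul_sqrt_self P hP.nonneg
  have hherm : (CFC.sqrt P)ᴴ = CFC.sqrt P := (CFC.sqrt_nonneg P).posSemidef.1.eq
  have h1 : (P * S).trace = ((CFC.sqrt P)ᴴ * S * CFC.sqrt P).trace := by
    rw [hherm]
    calc (P * S).trace = ((CFC.sqrt P * CFC.sqrt P) * S).trace := by rw [hsq]
      _ = (CFC.sqrt P * (CFC.sqrt P * S)).trace := by rw [Matrix.mul_assoc]
      _ = ((CFC.sqrt P * S) * CFC.sqrt P).trace := trace_mul_comm _ _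
      _ = (CFC.sqrt P * S * CFC.sqrt P).trace := rfl
  rw [h1]
  exact aux_trace_nonneg (hS.conjTranspose_mul_mul_same _)

/-- Antitonicity of the matrix inverse on positive definite matrices. -/
private lemma aux_inv_antitone {P Q : Matrix (Fin n) (Fin n) ℂ}
    (hP : P.PosDef) (hQ : Q.PosDef) (h : (Q - P).PosSemidef) :
    (P⁻¹ - Q⁻¹).PosSemidef := by
  set E := Q - P with hE
  have hPd := aux_isUnit_det hP
  have hQd := aux_isUnit_det hQ
  have key : P⁻¹ - Q⁻¹ = Q⁻¹ * E * Q⁻¹ + (E * Q⁻¹)ᴴ * P⁻¹ * (E * Q⁻¹) := by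
    have hEQ : (E * Q⁻¹)ᴴ = Q⁻¹ * E := by
      rw [conjTranspose_mul, h.1.eq, (hQ.inv).1.eq]
    rw [hEQ]
    have h1 : Q⁻¹ * E * P⁻¹ * E * Q⁻¹ = Q⁻¹ * E * P⁻¹ - Q⁻¹ * E * Q⁻¹ := by
      have hPE : P⁻¹ * E = P⁻¹ * Q - 1 := by
        rw [hE, Matrix.mul_sub, Matrix.nonsing_inv_mul _ hPd]
      calc Q⁻¹ * E * P⁻¹ * E * Q⁻¹ = Q⁻¹ * E * (P⁻¹ * E) * Q⁻¹ := by
            simp only [Matrix.mul_assoc]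
        _ = Q⁻¹ * E * (P⁻¹ * Q - 1) * Q⁻¹ := by rw [hPE]
        _ = Q⁻¹ * E * P⁻¹ * (Q * Q⁻¹) - Q⁻¹ * E * Q⁻¹ := by
            rw [Matrix.mul_sub, Matrix.sub_mul]
            simp only [Matrix.mul_assoc, Matrix.mul_one]
        _ = Q⁻¹ * E * P⁻¹ - Q⁻¹ * E * Q⁻¹ := by
            rw [Matrix.mul_nonsing_inv _ hQd, Matrix.mul_one]
    have h2 : Q⁻¹ * E * P⁻¹ = P⁻¹ - Q⁻¹ := by
      rw [hE, Matrix.mul_sub, Matrix.sub_mul, Matrix.nonsing_inv_mul _ hQd,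
        Matrix.one_mul, Matrix.mul_assoc, Matrix.mul_nonsing_inv _ hPd, Matrix.mul_one]
    have h3 : Q⁻¹ * E * P⁻¹ * (E * Q⁻¹) = Q⁻¹ * E * P⁻¹ - Q⁻¹ * E * Q⁻¹ := by
      rw [← Matrix.mul_assoc]; exact h1
    rw [h3, h2]
    abel
  rw [key]
  apply PosSemidef.add
  · have hq : Q⁻¹ * E * Q⁻¹ = (Q⁻¹)ᴴ * E * Q⁻¹ := by rw [(hQ.inv).1.eq]
    rw [hq]
    exact h.conjTranspose_mul_mul_same _
  · exact (hP.inv.posSemidef).conjTranspose_mul_mul_same _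

private lemma aux_cyc (P Q R S : Matrix (Fin n) (Fin n) ℂ) :
    (P * (Q * (R * S))).trace = (R * (S * (P * Q))).trace := by
  rw [show P * (Q * (R * S)) = (P * Q) * (R * S) from by rw [Matrix.mul_assoc],
    show R * (S * (P * Q)) = (R * S) * (P * Q) from by rw [Matrix.mul_assoc],
    trace_mul_comm]

end Aux

theorem trace_BLD_improved_scaled {n : ℕ} (A B C D : Matrix (Fin n) (Fin n) ℂ)
    (hA : A.PosDef) (hB : B.PosDef) (hC : C.PosSemidef) (hD : D.PosSemidef)
    (r : ℝ) (hr : 0 < r) :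
    (((A - B) * (B⁻¹ - A⁻¹) +
        (4 : ℂ) • ((C - D) * (((r : ℂ) • B + D)⁻¹ - ((r : ℂ) • A + C)⁻¹))).trace).im = 0 ∧
    0 ≤ (((A - B) * (B⁻¹ - A⁻¹) +
        (4 : ℂ) • ((C - D) * (((r : ℂ) • B + D)⁻¹ - ((r : ℂ) • A + C)⁻¹))).trace).re := by
  set X : Matrix (Fin n) (Fin n) ℂ := (r : ℂ) • A + C with hXdef
  set Y : Matrix (Fin n) (Fin n) ℂ := (r : ℂ) • B + D with hYdef
  set E : Matrix (Fin n) (Fin n) ℂ := A - B with hEdef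
  set F : Matrix (Fin n) (Fin n) ℂ := C - D with hFdef
  set G : Matrix (Fin n) (Fin n) ℂ := (r : ℂ) • E + (2 : ℂ) • F with hGdef
  -- positive definiteness of the shifted matrices
  have hrA : ((r : ℂ) • A).PosDef := aux_smul_posDef hA hr
  have hrB : ((r : ℂ) • B).PosDef := aux_smul_posDef hB hr
  have hX : X.PosDef := hrA.add_posSemidef hC
  have hY : Y.PosDef := hrB.add_posSemidef hD
  have hAd := aux_isUnit_det hA
  have hBd := aux_isUnit_det hB
  have hXd := aux_isUnit_det hX
  have hYd := aux_isUnit_det hY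
  have hrne : (r : ℂ) ≠ 0 := Complex.ofReal_ne_zero.mpr hr.ne'
  -- Hermitian differences
  have hE' : Eᴴ = E := (hA.1.sub hB.1).eq
  have hF' : Fᴴ = F := (hC.1.sub hD.1).eq
  have hG' : Gᴴ = G := by
    rw [hGdef, conjTranspose_add, conjTranspose_smul, conjTranspose_smul, hE', hF']
    simp [Complex.star_def, Complex.conj_ofReal]
  -- scaled inverses
  have hsA : ((r : ℂ) • A)⁻¹ = ((r⁻¹ : ℝ) : ℂ) • A⁻¹ := by
    apply Matrix.inv_eq_right_inv
    rw [Matrix.smul_mul, Matrix.mul_smul, smul_smul, ← Complex.ofReal_mul,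
      mul_inv_cancel₀ hr.ne', Complex.ofReal_one, one_smul, Matrix.mul_nonsing_inv _ hAd]
  have hsB : ((r : ℂ) • B)⁻¹ = ((r⁻¹ : ℝ) : ℂ) • B⁻¹ := by
    apply Matrix.inv_eq_right_inv
    rw [Matrix.smul_mul, Matrix.mul_smul, smul_smul, ← Complex.ofReal_mul,
      mul_inv_cancel₀ hr.ne', Complex.ofReal_one, one_smul, Matrix.mul_nonsing_inv _ hBd]
  -- Loewner-type inequalities
  have hYmB : (Y - (r : ℂ) • B).PosSemidef := by
    have : Y - (r : ℂ) • B = D := by rw [hYdef]; abel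
    rwa [this]
  have hXmA : (X - (r : ℂ) • A).PosSemidef := by
    have : X - (r : ℂ) • A = C := by rw [hXdef]; abel
    rwa [this]
  have hM1 : (B⁻¹ - (r : ℂ) • Y⁻¹).PosSemidef := by
    have h0 := aux_inv_antitone hrB hY hYmB
    have h1 := aux_smul_posSemidef h0 hr.le
    have e : (r : ℂ) • (((r : ℂ) • B)⁻¹ - Y⁻¹) = B⁻¹ - (r : ℂ) • Y⁻¹ := by
      rw [hsB, smul_sub, smul_smul, ← Complex.ofReal_mul,
        mul_inv_cancel₀ hr.ne', Complex.ofReal_one, one_smul]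
    rwa [e] at h1
  have hM3 : (A⁻¹ - (r : ℂ) • X⁻¹).PosSemidef := by
    have h0 := aux_inv_antitone hrA hX hXmA
    have h1 := aux_smul_posSemidef h0 hr.le
    have e : (r : ℂ) • (((r : ℂ) • A)⁻¹ - X⁻¹) = A⁻¹ - (r : ℂ) • X⁻¹ := by
      rw [hsA, smul_sub, smul_smul, ← Complex.ofReal_mul,
        mul_inv_cancel₀ hr.ne', Complex.ofReal_one, one_smul]
    rwa [e] at h1
  have hM2 : ((r : ℂ) • Y⁻¹).PosSemidef := aux_smul_posSemidef hY.inv.posSemidef hr.le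
  -- the three nonnegative trace terms
  have hS1 : (E * (B⁻¹ - (r : ℂ) • Y⁻¹) * E).PosSemidef := by
    have h := hM1.conjTranspose_mul_mul_same E
    rwa [hE'] at h
  have hS2 : (E * ((r : ℂ) • Y⁻¹) * E).PosSemidef := by
    have h := hM2.conjTranspose_mul_mul_same E
    rwa [hE'] at h
  have hS3 : (G * Y⁻¹ * G).PosSemidef := by
    have h := (hY.inv.posSemidef).conjTranspose_mul_mul_same G
    rwa [hG'] at h
  have hT1 : 0 ≤ ((E * (B⁻¹ - (r : ℂ) • Y⁻¹) * E) * A⁻¹).trace :=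
    aux_trace_mul_nonneg hS1 hA.inv.posSemidef
  have hT2 : 0 ≤ ((E * ((r : ℂ) • Y⁻¹) * E) * (A⁻¹ - (r : ℂ) • X⁻¹)).trace :=
    aux_trace_mul_nonneg hS2 hM3
  have hT3 : 0 ≤ ((G * Y⁻¹ * G) * X⁻¹).trace :=
    aux_trace_mul_nonneg hS3 hX.inv.posSemidef
  -- algebraic identities
  have hba : B⁻¹ - A⁻¹ = B⁻¹ * E * A⁻¹ := by
    rw [hEdef, Matrix.mul_sub, Matrix.sub_mul, Matrix.mul_assoc,
      Matrix.mul_nonsing_inv _ hAd, Matrix.mul_one, Matrix.nonsing_inv_mul _ hBd,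
      Matrix.one_mul]
  have hZ : (r : ℂ) • E + F = X - Y := by
    rw [hEdef, hFdef, hXdef, hYdef, smul_sub]; abel
  have hyx1 : Y⁻¹ - X⁻¹ = Y⁻¹ * ((r : ℂ) • E + F) * X⁻¹ := by
    rw [hZ, Matrix.mul_sub, Matrix.sub_mul, Matrix.mul_assoc,
      Matrix.mul_nonsing_inv _ hXd, Matrix.mul_one, Matrix.nonsing_inv_mul _ hYd,
      Matrix.one_mul]
  have hyx2 : Y⁻¹ - X⁻¹ = X⁻¹ * ((r : ℂ) • E + F) * Y⁻¹ := by
    rw [hZ, Matrix.mul_sub, Matrix.sub_mul, Matrix.nonsing_inv_mul _ hXd,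
      Matrix.one_mul, Matrix.mul_assoc, Matrix.mul_nonsing_inv _ hYd, Matrix.mul_one]
  -- expansions
  have X1 : (E * (B⁻¹ - A⁻¹)).trace = (E * (B⁻¹ * (E * A⁻¹))).trace := by
    rw [hba]; simp only [Matrix.mul_assoc]
  have u1 : (F * (Y⁻¹ - X⁻¹)).trace
      = (r : ℂ) * (F * (Y⁻¹ * (E * X⁻¹))).trace + (F * (Y⁻¹ * (F * X⁻¹))).trace := by
    rw [hyx1]
    simp only [Matrix.mul_add, Matrix.add_mul, Matrix.smul_mul, Matrix.mul_smul,
      Matrix.mul_assoc, Matrix.trace_add, Matrix.trace_smul, smul_eq_mul]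
  have u2 : (F * (Y⁻¹ - X⁻¹)).trace
      = (r : ℂ) * (F * (X⁻¹ * (E * Y⁻¹))).trace + (F * (X⁻¹ * (F * Y⁻¹))).trace := by
    rw [hyx2]
    simp only [Matrix.mul_add, Matrix.add_mul, Matrix.smul_mul, Matrix.mul_smul,
      Matrix.mul_assoc, Matrix.trace_add, Matrix.trace_smul, smul_eq_mul]
  have c1 : (F * (X⁻¹ * (E * Y⁻¹))).trace = (E * (Y⁻¹ * (F * X⁻¹))).trace :=
    aux_cyc F X⁻¹ E Y⁻¹
  have c2 : (F * (X⁻¹ * (F * Y⁻¹))).trace = (F * (Y⁻¹ * (F * X⁻¹))).trace :=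
    aux_cyc F X⁻¹ F Y⁻¹
  have V1 : ((E * (B⁻¹ - (r : ℂ) • Y⁻¹) * E) * A⁻¹).trace
      = (E * (B⁻¹ * (E * A⁻¹))).trace - (r : ℂ) * (E * (Y⁻¹ * (E * A⁻¹))).trace := by
    simp only [Matrix.mul_sub, Matrix.sub_mul, Matrix.smul_mul, Matrix.mul_smul,
      Matrix.mul_assoc, Matrix.trace_sub, Matrix.trace_smul, smul_eq_mul]
  have V2 : ((E * ((r : ℂ) • Y⁻¹) * E) * (A⁻¹ - (r : ℂ) • X⁻¹)).trace
      = (r : ℂ) * (E * (Y⁻¹ * (E * A⁻¹))).trace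
        - (r : ℂ) * ((r : ℂ) * (E * (Y⁻¹ * (E * X⁻¹))).trace) := by
    simp only [Matrix.mul_sub, Matrix.sub_mul, Matrix.smul_mul, Matrix.mul_smul,
      Matrix.mul_assoc, Matrix.trace_sub, Matrix.trace_smul, smul_eq_mul]
  have V3 : ((G * Y⁻¹ * G) * X⁻¹).trace
      = (r : ℂ) * ((r : ℂ) * (E * (Y⁻¹ * (E * X⁻¹))).trace)
        + 2 * ((r : ℂ) * (E * (Y⁻¹ * (F * X⁻¹))).trace)
        + 2 * ((r : ℂ) * (F * (Y⁻¹ * (E * X⁻¹))).trace)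
        + 4 * (F * (Y⁻¹ * (F * X⁻¹))).trace := by
    rw [hGdef]
    simp only [Matrix.mul_add, Matrix.add_mul, Matrix.smul_mul, Matrix.mul_smul,
      Matrix.mul_assoc, Matrix.trace_add, Matrix.trace_smul, smul_eq_mul]
    ring
  -- the key identity
  have key : (E * (B⁻¹ - A⁻¹) + (4 : ℂ) • (F * (Y⁻¹ - X⁻¹))).trace
      = ((E * (B⁻¹ - (r : ℂ) • Y⁻¹) * E) * A⁻¹).trace
        + ((E * ((r : ℂ) • Y⁻¹) * E) * (A⁻¹ - (r : ℂ) • X⁻¹)).trace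
        + ((G * Y⁻¹ * G) * X⁻¹).trace := by
    rw [Matrix.trace_add, Matrix.trace_smul, smul_eq_mul]
    linear_combination X1 + 2 * u1 + 2 * u2 + 2 * (r : ℂ) * c1 + 2 * c2 - V1 - V2 - V3
  have main : 0 ≤ (E * (B⁻¹ - A⁻¹) + (4 : ℂ) • (F * (Y⁻¹ - X⁻¹))).trace := by
    rw [key]
    exact add_nonneg (add_nonneg hT1 hT2) hT3
  rw [Complex.nonneg_iff] at main
  exact ⟨main.2.symm, main.1⟩
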